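/- Let n ≥ 3 and let reports be pairwise rankings: each individual k reports, for each ordered pair of distinct individuals (i,j) with i ≠ k and j ≠ k, whether k ranks i above j (the report is antisymmetric in (i,j)). Let s be a scoring rule assigning a real score s_i(r) to each individual i at each report profile r, satisfying: (i) s_i(r) is independent of i's own report, i.e. s_i(r) = s_i(r') whenever r_{-i} = r'_{-i}; and (ii) monotonicity: if the profile r' is obtained from r by having a single reporter k change his comparison of one pair from ranking i below some individual to ranking i above that individual (all other comparisons unchanged), then s_i(r') > s_i(r). Then there exist a threshold \underline{s}, a report profile r, two distinct individuals i and j, and an alternative report for j producing a profile r' that differs from r only in j's report, such that: i is not in the targeted set T(r) = {m : s_m(r) > \underline{s}} but i is in T(r'), and j's membership in the targeted set is the same under r and r'. Hence the three-step mechanism with a monotonic scoring rule is not group-strategy-proof: it is manipulable by the coalition {i,j}. -/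
import Mathlib


/-- **Proposition 2, failure of group-strategy-proofness.**
Each individual `k` reports, for each ordered pair `(a,b)` of distinct individuals
different from `k`, whether `k` ranks `a` above `b` (`r k a b = true`), reports
being antisymmetric in the pair.  Suppose `n ≥ 3` and the scoring rule `s`
(i) excludes own reports, and (ii) is monotonic: if a single reporter `k` flips one
comparison from ranking `i` below `m` to ranking `i` above `m` (all other
comparisons unchanged) then `i`'s score strictly increases.  Then there exist a
threshold `sbar`, a (valid, antisymmetric) report profile `r`, individuals `i ≠ j`,
and a profile `r'` differing from `r` only in `j`'s report, such that `i` is not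
targeted at `r` but is targeted at `r'`, while `j`'s membership in the targeted
set is the same under `r` and `r'`: the mechanism is manipulable by `{i, j}`,
hence not group-strategy-proof. -/
theorem mechanism_not_group_strategy_proof
    {N : Type*} [Fintype N] [DecidableEq N] (hn : 3 ≤ Fintype.card N)
    (s : (N → N → N → Bool) → N → ℝ)
    (h_own : ∀ (i : N) (r r' : N → N → N → Bool),
      (∀ m : N, m ≠ i → r m = r' m) → s r i = s r' i)
    (h_mono : ∀ (r r' : N → N → N → Bool) (k i m : N),
      i ≠ m → i ≠ k → m ≠ k →
      r k i m = false → r' k i m = true → r' k m i = false →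
      (∀ q a b : N, ¬(q = k ∧ ((a = i ∧ b = m) ∨ (a = m ∧ b = i))) →
        r' q a b = r q a b) →
      s r i < s r' i) :
    ∃ (sbar : ℝ) (r r' : N → N → N → Bool) (i j : N), i ≠ j ∧
      (∀ k a b : N, a ≠ b → a ≠ k → b ≠ k → r k a b = !(r k b a)) ∧
      (∀ k a b : N, a ≠ b → a ≠ k → b ≠ k → r' k a b = !(r' k b a)) ∧
      (∀ m : N, m ≠ j → r' m = r m) ∧
      ¬ (s r i > sbar) ∧ (s r' i > sbar) ∧
      ((s r j > sbar) ↔ (s r' j > sbar)) := by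
  classical
  set g : N → ℕ := fun a => (Fintype.equivFin N a : ℕ) with hg_def
  have hg : Function.Injective g := fun a b h => by
    have : (Fintype.equivFin N) a = (Fintype.equivFin N) b := Fin.ext h
    exact (Fintype.equivFin N).injective this
  -- key construction given three distinct elements with g m < g i
  have key : ∀ i m j : N, i ≠ m → i ≠ j → m ≠ j → g m < g i →
      ∃ (sbar : ℝ) (r r' : N → N → N → Bool) (i j : N), i ≠ j ∧
      (∀ k a b : N, a ≠ b → a ≠ k → b ≠ k → r k a b = !(r k b a)) ∧
      (∀ k a b : N, a ≠ b → a ≠ k → b ≠ k → r' k a b = !(r' k b a)) ∧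
      (∀ m : N, m ≠ j → r' m = r m) ∧
      ¬ (s r i > sbar) ∧ (s r' i > sbar) ∧
      ((s r j > sbar) ↔ (s r' j > sbar)) := by
    intro i m j him hij hmj hlt
    set r : N → N → N → Bool := fun _ a b => decide (g a < g b) with hr
    set r' : N → N → N → Bool := fun q a b =>
      if q = j ∧ ((a = i ∧ b = m) ∨ (a = m ∧ b = i)) then decide (a = i)
      else r q a b with hr'
    have hanti : ∀ k a b : N, a ≠ b → a ≠ k → b ≠ k → r k a b = !(r k b a) := by
      intro k a b hab _ _
      rcases lt_or_gt_of_ne (fun h => hab (hg h)) with h | h <;>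
        simp [hr, h, asymm h]
    have hdiff : ∀ q a b : N, ¬(q = j ∧ ((a = i ∧ b = m) ∨ (a = m ∧ b = i))) →
        r' q a b = r q a b := by
      intro q a b h; simp [hr', h]
    have hanti' : ∀ k a b : N, a ≠ b → a ≠ k → b ≠ k → r' k a b = !(r' k b a) := by
      intro k a b hab hak hbk
      by_cases h1 : k = j ∧ ((a = i ∧ b = m) ∨ (a = m ∧ b = i))
      · obtain ⟨hk, hor⟩ := h1
        rcases hor with ⟨ha, hb⟩ | ⟨ha, hb⟩ <;> subst hk ha hb <;>
          simp [hr', him, him.symm]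
      · rw [hdiff _ _ _ h1, hdiff]
        · exact hanti k a b hab hak hbk
        · rintro ⟨hk, hor⟩
          exact h1 ⟨hk, hor.symm.imp (fun ⟨x, y⟩ => ⟨y, x⟩) (fun ⟨x, y⟩ => ⟨y, x⟩)⟩
    have hsame : ∀ q : N, q ≠ j → r' q = r q := by
      intro q hq; funext a b
      exact hdiff q a b (fun h => hq h.1)
    have h1 : r j i m = false := by simp [hr, not_lt_of_gt hlt]
    have h2 : r' j i m = true := by simp [hr']
    have h3 : r' j m i = false := by simp [hr', him.symm]
    have hscore : s r i < s r' i :=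
      h_mono r r' j i m him hij hmj h1 h2 h3 hdiff
    have hjsame : s r j = s r' j := h_own j r r' (fun q hq => (hsame q hq).symm)
    exact ⟨s r i, r, r', i, j, hij, hanti, hanti', hsame, by simp, hscore,
      by rw [hjsame]⟩
  obtain ⟨e⟩ : Nonempty (Fin 3 ↪ N) := Function.Embedding.nonempty_of_card_le
    (by simpa using hn)
  have h01 : e 0 ≠ e 1 := fun h => by simpa using e.injective h
  have h02 : e 0 ≠ e 2 := fun h => by simpa using e.injective h
  have h12 : e 1 ≠ e 2 := fun h => by simpa using e.injective h
  rcases lt_or_gt_of_ne (fun h => h01 (hg h)) with h | h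
  · exact key (e 1) (e 0) (e 2) h01.symm h12 h02 h
  · exact key (e 0) (e 1) (e 2) h01 h02 h12 h
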